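/- Let h : [-1,1] → ℝ be twice continuously differentiable with h(-1) = 0 and h'(-1) = h'(1) = 0. Then for every x ∈ [-1,1], 2|h(x)| ≤ (x+1) · ∫_{-1}^{1} |h''(s)| ds. -/

import Mathlib

/-- Inequality (eq_10): if `h(-1) = 0` and `h'(±1) = 0`, then
`2|h(x)| ≤ (x+1) ∫_{-1}^1 |h''(s)| ds` for every `x ∈ [-1,1]`. -/
theorem stmt_1 (h : ℝ → ℝ) (hreg : ContDiff ℝ 2 h)
    (hb1 : h (-1) = 0)
    (hb3 : deriv h (-1) = 0) (hb4 : deriv h 1 = 0) :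
    ∀ x ∈ Set.Icc (-1 : ℝ) 1,
      2 * |h x| ≤ (x + 1) * ∫ s in (-1 : ℝ)..1, |deriv (deriv h) s| := by
  intro x hx
  obtain ⟨hx1, hx2⟩ := hx
  have hd1 : Differentiable ℝ h := hreg.differentiable (by norm_num)
  have hreg1 : ContDiff ℝ 1 (deriv h) := by
    have := (contDiff_succ_iff_deriv.mp (show ContDiff ℝ (1 + 1) h from by norm_num; exact hreg)).2.2
    exact this
  have hd2 : Differentiable ℝ (deriv h) := hreg1.differentiable (by norm_num)
  have hc2 : Continuous (deriv (deriv h)) := ((contDiff_succ_iff_deriv.mp (show ContDiff ℝ (0 + 1) (deriv h) from by norm_num; exact hreg1)).2.2).continuous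
  have hc1 : Continuous (deriv h) := hd2.continuous
  set C := ∫ s in (-1 : ℝ)..1, |deriv (deriv h) s| with hC
  -- FTC for deriv h
  have ftc2 : ∀ a b : ℝ, deriv h b - deriv h a = ∫ t in a..b, deriv (deriv h) t := by
    intro a b
    rw [intervalIntegral.integral_deriv_eq_sub (fun t _ => hd2 t)
      (hc2.intervalIntegrable a b)]
  have key : ∀ t ∈ Set.Icc (-1 : ℝ) 1, 2 * |deriv h t| ≤ C := by
    intro t ht
    have h1 : |deriv h t| ≤ ∫ s in (-1 : ℝ)..t, |deriv (deriv h) s| := by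
      have := ftc2 (-1) t
      rw [hb3, sub_zero] at this
      rw [this]
      exact intervalIntegral.abs_integral_le_integral_abs ht.1
    have h2 : |deriv h t| ≤ ∫ s in t..1, |deriv (deriv h) s| := by
      have := ftc2 t 1
      rw [hb4] at this
      have h' : deriv h t = -∫ s in t..1, deriv (deriv h) s := by linarith [this]
      rw [h', abs_neg]
      exact intervalIntegral.abs_integral_le_integral_abs ht.2
    have hsplit : (∫ s in (-1 : ℝ)..t, |deriv (deriv h) s|)
        + ∫ s in t..1, |deriv (deriv h) s| = C := by
      rw [hC]
      exact intervalIntegral.integral_add_adjacent_intervals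
        ((hc2.abs).intervalIntegrable _ _) ((hc2.abs).intervalIntegrable _ _)
    linarith
  -- FTC for h
  have ftc1 : h x = ∫ t in (-1 : ℝ)..x, deriv h t := by
    rw [intervalIntegral.integral_deriv_eq_sub (fun t _ => hd1 t)
      (hc1.intervalIntegrable _ _), hb1, sub_zero]
  have habs : |h x| ≤ ∫ t in (-1 : ℝ)..x, |deriv h t| := by
    rw [ftc1]
    exact intervalIntegral.abs_integral_le_integral_abs hx1
  have hmono : (∫ t in (-1 : ℝ)..x, |deriv h t|) ≤ ∫ _t in (-1 : ℝ)..x, C / 2 := by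
    apply intervalIntegral.integral_mono_on hx1
      ((hc1.abs).intervalIntegrable _ _) (intervalIntegrable_const)
    intro t ht
    have := key t ⟨ht.1, le_trans ht.2 hx2⟩
    linarith
  have hconst : (∫ _t in (-1 : ℝ)..x, C / 2) = (x + 1) * (C / 2) := by
    rw [intervalIntegral.integral_const, smul_eq_mul]
    ring
  nlinarith [habs, hmono, hconst]
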